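/- arXiv:0811.0783 — 2 statements merged into one kernel-verified Lean document; each statement's English description precedes it below -/
import Mathlib

section
/- (Liu–Li–Yu–Chen joint measurability criterion) Let a, b ∈ ℝ³ with a·b = 0 and ‖a‖ ≤ 1, and let β ∈ ℝ with ‖b‖ ≤ β ≤ 2 − ‖b‖. Then the simple qubit observables E^{1,a} and E^{β,b} are jointly measurable if and only if 2‖a‖ ≤ √(β² − ‖b‖²) + √((2−β)² − ‖b‖²). -/
open Matrix
open scoped ComplexOrder

noncomputable section

/-- 2×2 complex matrices. -/
abbrev Mat2 := Matrix (Fin 2) (Fin 2) ℂ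

/-- The Pauli matrix σ₁. -/
def sigma1 : Mat2 := !![0, 1; 1, 0]
/-- The Pauli matrix σ₂. -/
def sigma2 : Mat2 := !![0, -Complex.I; Complex.I, 0]
/-- The Pauli matrix σ₃. -/
def sigma3 : Mat2 := !![1, 0; 0, -1]

/-- ℝ³ with the Euclidean norm. -/
abbrev E3 := EuclideanSpace ℝ (Fin 3)

/-- For `v ∈ ℝ³`, `v·σ = v₁σ₁ + v₂σ₂ + v₃σ₃`. -/
def dotSigma (v : E3) : Mat2 := (v 0 : ℂ) • sigma1 + (v 1 : ℂ) • sigma2 + (v 2 : ℂ) • sigma3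

/-- `A^{α,a} = (1/2)(α·I + a·σ)`. -/
def Amat (α : ℝ) (a : E3) : Mat2 := (2 : ℂ)⁻¹ • ((α : ℂ) • (1 : Mat2) + dotSigma a)

/-- An operator is an effect if `0 ≤ A ≤ I` in the Loewner order. -/
def IsEffect (A : Mat2) : Prop := A.PosSemidef ∧ (1 - A).PosSemidef

/-- The Loewner order: `A ≤ B` iff `B - A` is positive semidefinite. -/
def loewnerLE (A B : Mat2) : Prop := (B - A).PosSemidef

/-- The simple (two-outcome) qubit observable `E^{α,a}`,
with `E^{α,a}(1) = A^{α,a}` and `E^{α,a}(0) = I - A^{α,a}`. -/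
def Eobs (α : ℝ) (a : E3) : Fin 2 → Mat2 := fun i => if i = 1 then Amat α a else 1 - Amat α a

/-- `G` is a joint observable of the two-outcome observables `E` and `F`. -/
def IsJointObs (G : Fin 2 → Fin 2 → Mat2) (E F : Fin 2 → Mat2) : Prop :=
  (∀ i j, (G i j).PosSemidef) ∧ (∑ i, ∑ j, G i j) = 1 ∧
    (∀ i, (∑ j, G i j) = E i) ∧ (∀ j, (∑ i, G i j) = F j)

/-- Joint measurability of two two-outcome observables. -/
def JointlyMeasurable2 (E F : Fin 2 → Mat2) : Prop := ∃ G, IsJointObs G E F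

/-- `G` is a joint observable of the three two-outcome observables `E`, `F` and `K`. -/
def IsJointObs3 (G : Fin 2 → Fin 2 → Fin 2 → Mat2) (E F K : Fin 2 → Mat2) : Prop :=
  (∀ i j k, (G i j k).PosSemidef) ∧ (∑ i, ∑ j, ∑ k, G i j k) = 1 ∧
    (∀ i, (∑ j, ∑ k, G i j k) = E i) ∧ (∀ j, (∑ i, ∑ k, G i j k) = F j) ∧
    (∀ k, (∑ i, ∑ j, G i j k) = K k)

/-- Joint measurability of three two-outcome observables. -/
def JointlyMeasurable3 (E F K : Fin 2 → Mat2) : Prop := ∃ G, IsJointObs3 G E F K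

lemma amat_eq (α : ℝ) (v : E3) : Amat α v =
    !![((α:ℂ) + v 2)/2, ((v 0:ℂ) - v 1 * Complex.I)/2;
       ((v 0:ℂ) + v 1 * Complex.I)/2, ((α:ℂ) - v 2)/2] := by
  ext i j
  fin_cases i <;> fin_cases j <;>
    simp [Amat, dotSigma, sigma1, sigma2, sigma3, Matrix.one_apply] <;> ring

lemma amat_add (α α' : ℝ) (v v' : E3) : Amat α v + Amat α' v' = Amat (α+α') (v+v') := by
  ext i j
  fin_cases i <;> fin_cases j <;>
    simp [amat_eq, PiLp.add_apply] <;> push_cast <;> ring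

lemma amat_one : Amat 2 0 = 1 := by
  ext i j
  fin_cases i <;> fin_cases j <;> simp [amat_eq, Matrix.one_apply]

lemma quad (α : ℝ) (v : E3) (x : Fin 2 → ℂ) :
    star x ⬝ᵥ (Amat α v) *ᵥ x =
      ((((α + v 2) * Complex.normSq (x 0) + (α - v 2) * Complex.normSq (x 1))/2
        + v 0 * ((starRingEnd ℂ) (x 0) * x 1).re + v 1 * ((starRingEnd ℂ) (x 0) * x 1).im : ℝ) : ℂ) := by
  simp [dotProduct, mulVec, amat_eq, Fin.sum_univ_two, Complex.ext_iff, Complex.normSq_apply,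
    Complex.add_re, Complex.mul_re, Complex.mul_im, Complex.div_re, Complex.div_im]
  constructor <;> ring

lemma norm_sq_E3 (v : E3) : ‖v‖^2 = v 0^2 + v 1^2 + v 2^2 := by
  rw [EuclideanSpace.norm_eq, Real.sq_sqrt (by positivity)]
  simp [Fin.sum_univ_three, sq_abs]

lemma amat_herm (α : ℝ) (v : E3) : (Amat α v).IsHermitian := by
  rw [Matrix.IsHermitian, amat_eq]
  ext i j
  fin_cases i <;> fin_cases j <;> simp [Matrix.conjTranspose_apply, Complex.ext_iff]


lemma amat_psd_of (α : ℝ) (v : E3) (h : ‖v‖ ≤ α) : (Amat α v).PosSemidef := by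
  refine Matrix.PosSemidef.of_dotProduct_mulVec_nonneg (amat_herm α v) fun x => ?_
  rw [quad, Complex.zero_le_real]
  have hn : ‖v‖^2 = v 0^2 + v 1^2 + v 2^2 := norm_sq_E3 v
  have hv : v 0^2 + v 1^2 + v 2^2 ≤ α^2 := by nlinarith [norm_nonneg v]
  have hα : 0 ≤ α := le_trans (norm_nonneg v) h
  set n0 := Complex.normSq (x 0) with hn0
  set n1 := Complex.normSq (x 1) with hn1
  set R := ((starRingEnd ℂ) (x 0) * x 1).re with hR
  set I := ((starRingEnd ℂ) (x 0) * x 1).im with hI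
  have hRI : R^2 + I^2 = n0 * n1 := by
    simp [hR, hI, hn0, hn1, Complex.mul_re, Complex.mul_im, Complex.normSq_apply]
    ring
  have h0 : 0 ≤ n0 := Complex.normSq_nonneg _
  have h1 : 0 ≤ n1 := Complex.normSq_nonneg _
  rcases eq_or_lt_of_le hα with hz | hpos
  · -- α = 0, hence v = 0
    have hv0 : v 0 = 0 := by nlinarith [sq_nonneg (v 0), sq_nonneg (v 1), sq_nonneg (v 2)]
    have hv1 : v 1 = 0 := by nlinarith [sq_nonneg (v 0), sq_nonneg (v 1), sq_nonneg (v 2)]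
    have hv2 : v 2 = 0 := by nlinarith [sq_nonneg (v 0), sq_nonneg (v 1), sq_nonneg (v 2)]
    rw [hv0, hv1, hv2, ← hz]
    ring_nf
    positivity
  · rcases eq_or_lt_of_le (add_nonneg h0 h1) with hn' | hn'
    · have e0 : n0 = 0 := by linarith
      have e1 : n1 = 0 := by linarith
      have : R = 0 ∧ I = 0 := by constructor <;> nlinarith [sq_nonneg R, sq_nonneg I]
      rw [e0, e1, this.1, this.2]; norm_num
    · have key : 0 ≤ (α*(2*R) + (n0+n1)*v 0)^2 + (α*(2*I) + (n0+n1)*v 1)^2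
          + (α*(n0-n1) + (n0+n1)*v 2)^2 := by positivity
      have hv2 : (v 0^2+v 1^2+v 2^2)*(n0+n1)^2 ≤ α^2*(n0+n1)^2 :=
        mul_le_mul_of_nonneg_right hv (sq_nonneg _)
      have id1 : 2*α*(n0+n1) * (((α + v 2) * n0 + (α - v 2) * n1) + 2*(v 0 * R) + 2*(v 1 * I))
          = (α*(2*R) + (n0+n1)*v 0)^2 + (α*(2*I) + (n0+n1)*v 1)^2 + (α*(n0-n1) + (n0+n1)*v 2)^2
            + (α^2*(n0+n1)^2 - (v 0^2+v 1^2+v 2^2)*(n0+n1)^2) := by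
        linear_combination (-4*α^2) * hRI
      have key2 : 0 ≤ 2*α*(n0+n1) * (((α + v 2) * n0 + (α - v 2) * n1) + 2*(v 0 * R) + 2*(v 1 * I)) := by
        rw [id1]; linarith [key, hv2]
      have hprod : 0 < 2*α*(n0+n1) := by positivity
      have := (mul_nonneg_iff_of_pos_left hprod).mp key2
      linarith

lemma le_of_amat_psd (α : ℝ) (v : E3) (h : (Amat α v).PosSemidef) : ‖v‖ ≤ α := by
  have h0 := h.dotProduct_mulVec_nonneg (Pi.single 0 1)
  have h1 := h.dotProduct_mulVec_nonneg (Pi.single 1 1)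
  rw [quad] at h0 h1
  rw [Complex.zero_le_real] at h0 h1
  simp [Pi.single_apply] at h0 h1
  have hα : 0 ≤ α := by linarith
  have hdet : ((Amat α v).det).re = h.1.eigenvalues 0 * h.1.eigenvalues 1 := by
    rw [h.1.det_eq_prod_eigenvalues, Fin.prod_univ_two]
    simp [Complex.mul_re]
  have hdet2 : (Amat α v).det = (((α^2 - (v 0^2 + v 1^2 + v 2^2))/4 : ℝ) : ℂ) := by
    rw [amat_eq, Matrix.det_fin_two]
    simp [Complex.ext_iff, ← Complex.ofReal_pow]
    constructor <;> ring
  have hev0 := h.eigenvalues_nonneg 0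
  have hev1 := h.eigenvalues_nonneg 1
  have hge : 0 ≤ α^2 - (v 0^2 + v 1^2 + v 2^2) := by
    have h4 : ((Amat α v).det).re = (α^2 - (v 0^2 + v 1^2 + v 2^2))/4 := by
      rw [hdet2, Complex.ofReal_re]
    nlinarith [mul_nonneg hev0 hev1, hdet, h4]
  have hn : ‖v‖^2 = v 0^2 + v 1^2 + v 2^2 := norm_sq_E3 v
  nlinarith [norm_nonneg v]

lemma amat_psd_iff (α : ℝ) (v : E3) : (Amat α v).PosSemidef ↔ ‖v‖ ≤ α :=
  ⟨le_of_amat_psd α v, amat_psd_of α v⟩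

lemma herm_eq_amat (M : Mat2) (h : M.IsHermitian) : ∃ (α : ℝ) (v : E3), M = Amat α v := by
  have h00 : (starRingEnd ℂ) (M 0 0) = M 0 0 := congrFun (congrFun h 0) 0
  have h11 : (starRingEnd ℂ) (M 1 1) = M 1 1 := congrFun (congrFun h 1) 1
  have h01 : (starRingEnd ℂ) (M 1 0) = M 0 1 := congrFun (congrFun h 0) 1
  refine ⟨(M 0 0).re + (M 1 1).re, (show E3 from WithLp.toLp 2 ![2*(M 1 0).re, 2*(M 1 0).im, (M 0 0).re - (M 1 1).re]), ?_⟩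
  have i00 : (M 0 0).im = 0 := by
    have := congrArg Complex.im h00; simp [Complex.conj_im] at this; linarith
  have i11 : (M 1 1).im = 0 := by
    have := congrArg Complex.im h11; simp [Complex.conj_im] at this; linarith
  have r01 : (M 0 1).re = (M 1 0).re := by
    have := congrArg Complex.re h01; simpa using this.symm
  have im01 : (M 0 1).im = -(M 1 0).im := by
    have := congrArg Complex.im h01
    simp at this; linarith [this]
  ext i j
  fin_cases i <;> fin_cases j <;>
    simp [amat_eq, Complex.ext_iff, Complex.div_re, Complex.div_im, i00, i11, r01, im01] <;> ring


lemma amat_sub (α α' : ℝ) (v v' : E3) : Amat α v - Amat α' v' = Amat (α-α') (v-v') := by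
  have := amat_add (α-α') α' (v-v') v'
  simp only [sub_add_cancel] at this
  rw [← this]; abel

lemma one_sub_amat (α : ℝ) (v : E3) : 1 - Amat α v = Amat (2-α) (-v) := by
  rw [← amat_one, amat_sub]; congr 1; abel

lemma amat_congr {α α' : ℝ} {v v' : E3} (h1 : α = α') (h2 : v = v') :
    Amat α v = Amat α' v' := by rw [h1, h2]

lemma jm_iff (a b : E3) (β : ℝ) :
    JointlyMeasurable2 (Eobs 1 a) (Eobs β b) ↔
      ∃ (γ : ℝ) (g : E3), ‖g‖ ≤ γ ∧ ‖a - g‖ ≤ 1 - γ ∧ ‖b - g‖ ≤ β - γ ∧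
        ‖g - a - b‖ ≤ 1 - β + γ := by
  constructor
  · rintro ⟨G, hpos, -, hrow, hcol⟩
    obtain ⟨γ, g, hM⟩ := herm_eq_amat _ (hpos 1 1).1
    have h11 : ‖g‖ ≤ γ := (amat_psd_iff _ _).mp (hM ▸ hpos 1 1)
    have hr1 := hrow 1
    have hr0 := hrow 0
    have hc1 := hcol 1
    rw [Fin.sum_univ_two] at hr1 hr0 hc1
    norm_num [Eobs] at hr1 hr0 hc1
    have e10 : G 1 0 = Amat (1-γ) (a-g) := by
      have : G 1 0 = Amat 1 a - Amat γ g := by rw [← hM, ← hr1]; abel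
      rw [this, amat_sub]
    have e01 : G 0 1 = Amat (β-γ) (b-g) := by
      have : G 0 1 = Amat β b - Amat γ g := by rw [← hM, ← hc1]; abel
      rw [this, amat_sub]
    have e00 : G 0 0 = Amat (1-β+γ) (g-a-b) := by
      have : G 0 0 = (1 - Amat 1 a) - Amat (β-γ) (b-g) := by rw [← hr0, e01]; abel
      rw [this, one_sub_amat, amat_sub]
      exact amat_congr (by ring) (by abel)
    refine ⟨γ, g, h11, ?_, ?_, ?_⟩
    · exact (amat_psd_iff _ _).mp (e10 ▸ hpos 1 0)
    · exact (amat_psd_iff _ _).mp (e01 ▸ hpos 0 1)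
    · exact (amat_psd_iff _ _).mp (e00 ▸ hpos 0 0)
  · rintro ⟨γ, g, h1, h2, h3, h4⟩
    refine ⟨fun i j => if i = 1 then (if j = 1 then Amat γ g else Amat (1-γ) (a-g))
      else (if j = 1 then Amat (β-γ) (b-g) else Amat (1-β+γ) (g-a-b)), ?_, ?_, ?_, ?_⟩
    · intro i j
      fin_cases i <;> fin_cases j <;> norm_num <;> rw [amat_psd_iff] <;> assumption
    · rw [Fin.sum_univ_two, Fin.sum_univ_two, Fin.sum_univ_two]
      norm_num [amat_add]
      exact amat_one
    · intro i
      rw [Fin.sum_univ_two]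
      fin_cases i <;> norm_num [amat_add, Eobs, one_sub_amat] <;>
        exact amat_congr (by ring) (by abel)
    · intro j
      rw [Fin.sum_univ_two]
      fin_cases j <;> norm_num [amat_add, Eobs, one_sub_amat] <;>
        exact amat_congr (by ring) (by abel)

lemma le_of_sq {x y : ℝ} (hy : 0 ≤ y) (h : x^2 ≤ y^2) (hx : 0 ≤ x) : x ≤ y := by nlinarith

lemma rm {x y m r s : ℝ} (hr : 0 ≤ r) (hs : 0 ≤ s) (h1 : x^2+y^2 ≤ r^2)
    (h2 : x^2+(m-y)^2 ≤ s^2) : 2*|x| ≤ Real.sqrt ((r+s)^2 - m^2) := by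
  have hP : x^2 + y*(m-y) ≤ r*s := by
    nlinarith [mul_le_mul h1 h2 (by positivity) (by positivity), sq_nonneg (x*(m-y)-y*x),
      mul_nonneg hr hs, sq_nonneg (r*s - x^2 - y*(m-y)), sq_nonneg (r*s + x^2 + y*(m-y)),
      sq_nonneg x, sq_nonneg y, sq_nonneg (m-y)]
  have key : (2*|x|)^2 ≤ (r+s)^2 - m^2 := by
    have : (2*|x|)^2 = 4*x^2 := by rw [mul_pow, sq_abs]; ring
    nlinarith [hP, h1, h2]
  have hX : 0 ≤ (r+s)^2 - m^2 := le_trans (by positivity) key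
  exact le_of_sq (Real.sqrt_nonneg _) (by rw [Real.sq_sqrt hX]; exact key) (by positivity)

lemma scalar_core {s t m na γ β : ℝ} (hna : 0 ≤ na)
    (f1 : s^2+t^2 ≤ γ^2) (f2 : (na-s)^2+t^2 ≤ (1-γ)^2)
    (f3 : s^2+(m-t)^2 ≤ (β-γ)^2) (f4 : (na-s)^2+(m-t)^2 ≤ (1-β+γ)^2)
    (hγ : 0 ≤ γ) (hβγ : 0 ≤ β-γ) (h1γ : 0 ≤ 1-γ) (h1βγ : 0 ≤ 1-β+γ) :
    2*na ≤ Real.sqrt (β^2-m^2) + Real.sqrt ((2-β)^2-m^2) := by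
  have k1 := rm hγ hβγ f1 f3
  have k2 := rm h1γ h1βγ f2 f4
  rw [show γ+(β-γ) = β by ring] at k1
  rw [show (1-γ)+(1-β+γ) = 2-β by ring] at k2
  have habs : na ≤ |s| + |na - s| := by
    calc na = |na| := (abs_of_nonneg hna).symm
    _ = |s + (na - s)| := by ring_nf
    _ ≤ |s| + |na - s| := abs_add_le _ _
  linarith

lemma proj (u w : E3) (hu : ‖u‖ ≤ 1) : (inner ℝ w u:ℝ)^2 ≤ ‖w‖^2 := by
  have h := abs_real_inner_le_norm w u
  have : |(inner ℝ w u : ℝ)| ≤ ‖w‖ := by nlinarith [norm_nonneg w, norm_nonneg u]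
  nlinarith [sq_abs (inner ℝ w u : ℝ), abs_nonneg (inner ℝ w u : ℝ), norm_nonneg w]

lemma bessel2 {u v : E3} (hu : ‖u‖ = 1) (hv : ‖v‖ = 1) (huv : (inner ℝ u v : ℝ) = 0) (w : E3) :
    (inner ℝ w u : ℝ)^2 + (inner ℝ w v : ℝ)^2 ≤ ‖w‖^2 := by
  set p : ℝ := inner ℝ w u
  set q : ℝ := inner ℝ w v
  have h0 : (0:ℝ) ≤ inner ℝ (w - p•u - q•v) (w - p•u - q•v) := real_inner_self_nonneg
  have hww : (inner ℝ w w : ℝ) = ‖w‖^2 := real_inner_self_eq_norm_sq w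
  have huu : (inner ℝ u u : ℝ) = 1 := by rw [real_inner_self_eq_norm_sq, hu]; norm_num
  have hvv : (inner ℝ v v : ℝ) = 1 := by rw [real_inner_self_eq_norm_sq, hv]; norm_num
  have hvu : (inner ℝ v u : ℝ) = 0 := by rw [real_inner_comm]; exact huv
  have hwu : (inner ℝ u w : ℝ) = p := (real_inner_comm u w).symm
  have hwv : (inner ℝ v w : ℝ) = q := (real_inner_comm v w).symm
  simp only [inner_sub_left, inner_sub_right, real_inner_smul_left, real_inner_smul_right,
    hww, huu, hvv, huv, hvu, hwu, hwv] at h0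
  nlinarith [h0]

set_option maxHeartbeats 2000000 in
lemma forward_dir (a b : E3) (hab : (inner ℝ a b : ℝ) = 0) (β γ : ℝ) (g : E3)
    (h1 : ‖g‖ ≤ γ) (h2 : ‖a-g‖ ≤ 1-γ) (h3 : ‖b-g‖ ≤ β-γ) (h4 : ‖g-a-b‖ ≤ 1-β+γ) :
    2*‖a‖ ≤ Real.sqrt (β^2-‖b‖^2) + Real.sqrt ((2-β)^2-‖b‖^2) := by
  have hγ : 0 ≤ γ := le_trans (norm_nonneg g) h1
  have hβγ : 0 ≤ β-γ := le_trans (norm_nonneg _) h3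
  have h1γ : 0 ≤ 1-γ := le_trans (norm_nonneg _) h2
  have h1βγ : 0 ≤ 1-β+γ := le_trans (norm_nonneg _) h4
  have q1 : ‖g‖^2 ≤ γ^2 := by nlinarith [norm_nonneg g]
  have q2 : ‖a-g‖^2 ≤ (1-γ)^2 := by nlinarith [norm_nonneg (a-g)]
  have q3 : ‖b-g‖^2 ≤ (β-γ)^2 := by nlinarith [norm_nonneg (b-g)]
  have q4 : ‖g-a-b‖^2 ≤ (1-β+γ)^2 := by nlinarith [norm_nonneg (g-a-b)]
  by_cases ha0 : a = 0
  · simp [ha0]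
    positivity
  · set u : E3 := ‖a‖⁻¹ • a with hudef
    have hna : (0:ℝ) < ‖a‖ := norm_pos_iff.mpr ha0
    have hu : ‖u‖ = 1 := by
      rw [hudef, norm_smul, norm_inv, norm_norm]; field_simp
    have sau : (inner ℝ a u : ℝ) = ‖a‖ := by
      rw [hudef, real_inner_smul_right, real_inner_self_eq_norm_sq]; field_simp
    have sbu : (inner ℝ b u : ℝ) = 0 := by
      rw [hudef, real_inner_smul_right, real_inner_comm, hab]; ring
    set s : ℝ := inner ℝ g u with hsdef
    have e_au : (inner ℝ (a-g) u : ℝ) = ‖a‖ - s := by rw [inner_sub_left, sau]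
    have e_bu : (inner ℝ (b-g) u : ℝ) = -s := by rw [inner_sub_left, sbu]; ring
    have e_gu : (inner ℝ (g-a-b) u : ℝ) = s - ‖a‖ := by
      rw [inner_sub_left, inner_sub_left, sau, sbu]; ring
    by_cases hb0 : b = 0
    · have hnb : ‖b‖ = 0 := by rw [hb0, norm_zero]
      have f1 : s^2 + (0:ℝ)^2 ≤ γ^2 := by nlinarith [proj u g hu.le]
      have f2 : (‖a‖-s)^2 + (0:ℝ)^2 ≤ (1-γ)^2 := by
        have := proj u (a-g) hu.le; rw [e_au] at this; nlinarith
      have f3 : s^2 + (‖b‖-0)^2 ≤ (β-γ)^2 := by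
        have := proj u (b-g) hu.le; rw [e_bu] at this; rw [hnb]; nlinarith
      have f4 : (‖a‖-s)^2 + (‖b‖-0)^2 ≤ (1-β+γ)^2 := by
        have := proj u (g-a-b) hu.le; rw [e_gu] at this; rw [hnb]; nlinarith
      exact scalar_core (norm_nonneg a) f1 f2 f3 f4 hγ hβγ h1γ h1βγ
    · set v : E3 := ‖b‖⁻¹ • b with hvdef
      have hnb : (0:ℝ) < ‖b‖ := norm_pos_iff.mpr hb0
      have hv : ‖v‖ = 1 := by rw [hvdef, norm_smul, norm_inv, norm_norm]; field_simp
      have huv : (inner ℝ u v : ℝ) = 0 := by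
        rw [hudef, hvdef, real_inner_smul_left, real_inner_smul_right, hab]; ring
      have sbv : (inner ℝ b v : ℝ) = ‖b‖ := by
        rw [hvdef, real_inner_smul_right, real_inner_self_eq_norm_sq]; field_simp
      have sav : (inner ℝ a v : ℝ) = 0 := by
        rw [hvdef, real_inner_smul_right, hab]; ring
      set t : ℝ := inner ℝ g v with htdef
      have e_av : (inner ℝ (a-g) v : ℝ) = -t := by rw [inner_sub_left, sav]; ring
      have e_bv : (inner ℝ (b-g) v : ℝ) = ‖b‖ - t := by rw [inner_sub_left, sbv]
      have e_gv : (inner ℝ (g-a-b) v : ℝ) = t - ‖b‖ := by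
        rw [inner_sub_left, inner_sub_left, sav, sbv]; ring
      have f1 : s^2 + t^2 ≤ γ^2 := by nlinarith [bessel2 hu hv huv g]
      have f2 : (‖a‖-s)^2 + t^2 ≤ (1-γ)^2 := by
        have := bessel2 hu hv huv (a-g); rw [e_au, e_av] at this; nlinarith
      have f3 : s^2 + (‖b‖-t)^2 ≤ (β-γ)^2 := by
        have := bessel2 hu hv huv (b-g); rw [e_bu, e_bv] at this; nlinarith
      have f4 : (‖a‖-s)^2 + (‖b‖-t)^2 ≤ (1-β+γ)^2 := by
        have := bessel2 hu hv huv (g-a-b); rw [e_gu, e_gv] at this; nlinarith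
      exact scalar_core (norm_nonneg a) f1 f2 f3 f4 hγ hβγ h1γ h1βγ

lemma norm_comb {u b : E3} (hub : (inner ℝ u b : ℝ) = 0) (x y : ℝ) :
    ‖x•u + y•b‖^2 = x^2*‖u‖^2 + y^2*‖b‖^2 := by
  rw [← real_inner_self_eq_norm_sq]
  have hbu : (inner ℝ b u : ℝ) = 0 := by rw [real_inner_comm]; exact hub
  simp only [inner_add_left, inner_add_right, real_inner_smul_left, real_inner_smul_right,
    real_inner_self_eq_norm_sq, hub, hbu]
  rw [norm_smul, norm_smul]
  simp [mul_pow, sq_abs]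

set_option maxHeartbeats 1000000 in
lemma construct (a b : E3) (hab : (inner ℝ a b : ℝ) = 0) (β : ℝ) (hb1 : ‖b‖ ≤ β)
    (hb2 : β ≤ 2 - ‖b‖)
    (hcrit : 2*‖a‖ ≤ Real.sqrt (β^2-‖b‖^2) + Real.sqrt ((2-β)^2-‖b‖^2)) :
    ∃ (γ : ℝ) (g : E3), ‖g‖ ≤ γ ∧ ‖a - g‖ ≤ 1 - γ ∧ ‖b - g‖ ≤ β - γ ∧
      ‖g - a - b‖ ≤ 1 - β + γ := by
  set S1 := Real.sqrt (β^2-‖b‖^2) with hS1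
  set S2 := Real.sqrt ((2-β)^2-‖b‖^2) with hS2
  have hb0 : (0:ℝ) ≤ ‖b‖ := norm_nonneg b
  have hβ : 0 ≤ β := le_trans hb0 hb1
  have h2β : ‖b‖ ≤ 2-β := by linarith
  have hS1sq : S1^2 = β^2-‖b‖^2 := Real.sq_sqrt (by nlinarith)
  have hS2sq : S2^2 = (2-β)^2-‖b‖^2 := Real.sq_sqrt (by nlinarith)
  have hS1n : 0 ≤ S1 := Real.sqrt_nonneg _
  have hS2n : 0 ≤ S2 := Real.sqrt_nonneg _
  set s := min ‖a‖ (S1/2) with hsdef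
  have hs0 : 0 ≤ s := le_min (norm_nonneg a) (by positivity)
  have hs1 : s ≤ S1/2 := min_le_right _ _
  have hs2 : s ≤ ‖a‖ := min_le_left _ _
  have hkey : 2*(‖a‖-s) ≤ S2 := by
    rcases le_total ‖a‖ (S1/2) with h | h
    · rw [hsdef, min_eq_left h]; simpa using hS2n
    · rw [hsdef, min_eq_right h]; linarith
  set u : E3 := ‖a‖⁻¹ • a with hudef
  have hau : ‖a‖ • u = a := by
    by_cases ha0 : a = 0
    · simp [ha0, hudef]
    · rw [hudef, smul_smul, mul_inv_cancel₀ (norm_ne_zero_iff.mpr ha0), one_smul]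
  have hub : (inner ℝ u b : ℝ) = 0 := by
    rw [hudef, real_inner_smul_left, hab]; ring
  have hcu : s^2*‖u‖^2 = s^2 ∧ (‖a‖-s)^2*‖u‖^2 = (‖a‖-s)^2 := by
    by_cases ha0 : a = 0
    · have : ‖a‖ = 0 := by rw [ha0, norm_zero]
      have hs : s = 0 := le_antisymm (this ▸ hs2) hs0
      constructor <;> simp [hs, this]
    · have hna : (0:ℝ) < ‖a‖ := norm_pos_iff.mpr ha0
      have : ‖u‖ = 1 := by
        rw [hudef, norm_smul, Real.norm_eq_abs, abs_inv, abs_norm]; field_simp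
      rw [this]; constructor <;> ring
  refine ⟨β/2, s•u + (2:ℝ)⁻¹•b, ?_, ?_, ?_, ?_⟩
  · refine le_of_sq (by linarith) ?_ (norm_nonneg _)
    rw [norm_comb hub]
    nlinarith [hcu.1]
  · have e : a - (s•u + (2:ℝ)⁻¹•b) = (‖a‖-s)•u + (-(2:ℝ)⁻¹)•b := by
      rw [sub_smul, neg_smul, hau]; abel
    refine le_of_sq (by linarith) ?_ (norm_nonneg _)
    rw [e, norm_comb hub]
    nlinarith [hcu.2]
  · have e : b - (s•u + (2:ℝ)⁻¹•b) = (-s)•u + (1-(2:ℝ)⁻¹)•b := by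
      rw [sub_smul, one_smul, neg_smul]; abel
    refine le_of_sq (by linarith) ?_ (norm_nonneg _)
    rw [e, norm_comb hub]
    have : (-s)^2*‖u‖^2 = s^2 := by rw [neg_pow]; simpa using hcu.1
    nlinarith [this]
  · have e : (s•u + (2:ℝ)⁻¹•b) - a - b = (s-‖a‖)•u + ((2:ℝ)⁻¹-1)•b := by
      rw [sub_smul, sub_smul, one_smul, hau]; abel
    refine le_of_sq (by linarith) ?_ (norm_nonneg _)
    rw [e, norm_comb hub]
    have : (s-‖a‖)^2*‖u‖^2 = (‖a‖-s)^2 := by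
      have h2 : (s-‖a‖)^2 = (‖a‖-s)^2 := by ring
      rw [h2]; exact hcu.2
    nlinarith [this]

/-- Liu–Li–Yu–Chen: for `a ⊥ b`, `‖a‖ ≤ 1` and `‖b‖ ≤ β ≤ 2 - ‖b‖`,
the observables `E^{1,a}` and `E^{β,b}` are jointly measurable iff
`2‖a‖ ≤ √(β² - ‖b‖²) + √((2-β)² - ‖b‖²)`. -/
theorem liu_li_yu_chen_criterion (a b : E3) (hab : (inner ℝ a b : ℝ) = 0) (ha : ‖a‖ ≤ 1)
    (β : ℝ) (hb1 : ‖b‖ ≤ β) (hb2 : β ≤ 2 - ‖b‖) :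
    JointlyMeasurable2 (Eobs 1 a) (Eobs β b) ↔
      2 * ‖a‖ ≤ Real.sqrt (β ^ 2 - ‖b‖ ^ 2) + Real.sqrt ((2 - β) ^ 2 - ‖b‖ ^ 2) := by
  rw [jm_iff]
  constructor
  · rintro ⟨γ, g, h1, h2, h3, h4⟩
    exact forward_dir a b hab β γ g h1 h2 h3 h4
  · exact construct a b hab β hb1 hb2
end
end

section
/- Let a, b, c ∈ ℝ³ be mutually orthogonal vectors, each of Euclidean norm l, where 1/√3 < l ≤ 1/√2. Then each of the pairs (E^{1,a}, E^{1,b}), (E^{1,a}, E^{1,c}), (E^{1,b}, E^{1,c}) is jointly measurable, but the triple E^{1,a}, E^{1,b}, E^{1,c} is not jointly measurable. -/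
open Matrix
open scoped ComplexOrder

noncomputable section

lemma smul_one_add_dotSigma (r : ℝ) (v : E3) : (r : ℂ) • (1 : Mat2) + dotSigma v =
    !![(r : ℂ) + v 2, (v 0 : ℂ) - (v 1 : ℂ) * Complex.I;
       (v 0 : ℂ) + (v 1 : ℂ) * Complex.I, (r : ℂ) - v 2] := by
  ext i j
  fin_cases i <;> fin_cases j <;>
    simp [dotSigma, sigma1, sigma2, sigma3, Matrix.one_apply] <;> ring

lemma key_ineq (r v0 v1 v2 p q s t : ℝ) (hv : v0^2+v1^2+v2^2 ≤ r^2) (hr : 0 ≤ r) :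
    0 ≤ (r+v2)*(p^2+q^2) + (r-v2)*(s^2+t^2) + 2*(v0*(p*s+q*t) + v1*(p*t-q*s)) := by
  have h2 : -r ≤ v2 ∧ v2 ≤ r := by
    constructor <;> nlinarith [sq_nonneg v0, sq_nonneg v1]
  have hA : 0 ≤ (r+v2)*(p^2+q^2) := by nlinarith [sq_nonneg p, sq_nonneg q]
  have hB : 0 ≤ (r-v2)*(s^2+t^2) := by nlinarith [sq_nonneg s, sq_nonneg t]
  have hC2 : (v0*(p*s+q*t) + v1*(p*t-q*s))^2 ≤ ((r+v2)*(p^2+q^2)) * ((r-v2)*(s^2+t^2)) := by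
    nlinarith [sq_nonneg (v0*(p*t-q*s) - v1*(p*s+q*t)), sq_nonneg (p*s+q*t), sq_nonneg (p*t-q*s),
      mul_nonneg (mul_nonneg (add_nonneg (sq_nonneg p) (sq_nonneg q)) (add_nonneg (sq_nonneg s) (sq_nonneg t))) (sub_nonneg.mpr hv)]
  nlinarith [sq_nonneg ((r+v2)*(p^2+q^2) - (r-v2)*(s^2+t^2)), hA, hB, hC2]

lemma psd_aux (r : ℝ) (v : E3) (hr : 0 ≤ r) (hv : ‖v‖ ≤ r) :
    ((r : ℂ) • (1 : Mat2) + dotSigma v).PosSemidef := by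
  have hv2 : (v 0)^2 + (v 1)^2 + (v 2)^2 ≤ r^2 := by
    have h := EuclideanSpace.norm_eq v
    have h2 : ‖v‖^2 = (v 0)^2 + (v 1)^2 + (v 2)^2 := by
      rw [h, Real.sq_sqrt (by positivity)]
      simp [Fin.sum_univ_three, sq_abs]
    nlinarith [norm_nonneg v]
  rw [smul_one_add_dotSigma]
  refine Matrix.PosSemidef.of_dotProduct_mulVec_nonneg ?_ ?_
  · ext i j
    fin_cases i <;> fin_cases j <;>
      simp [Matrix.conjTranspose_apply, Complex.ext_iff]
  · intro x
    simp only [Matrix.mulVec, dotProduct, Fin.sum_univ_two, Pi.star_apply,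
      Matrix.cons_val', Matrix.cons_val_zero, Matrix.cons_val_one, Matrix.head_cons,
      Matrix.empty_val', Matrix.cons_val_fin_one, Matrix.head_fin_const, Matrix.of_apply,
      Matrix.cons_val_zero, Matrix.cons_val_one]
    rw [Complex.le_def]
    constructor
    · simp only [Complex.add_re, Complex.mul_re, Complex.zero_re, Complex.sub_re,
        Complex.sub_im, Complex.add_im, Complex.mul_im, Complex.ofReal_re, Complex.ofReal_im,
        RCLike.star_def, Complex.conj_re, Complex.conj_im, Complex.I_re, Complex.I_im]
      have := key_ineq r (v 0) (v 1) (v 2) (x 0).re (x 0).im (x 1).re (x 1).im hv2 hr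
      ring_nf
      ring_nf at this
      linarith
    · simp only [Complex.add_im, Complex.mul_im, Complex.zero_im, Complex.sub_re,
        Complex.sub_im, Complex.add_re, Complex.mul_re, Complex.ofReal_re, Complex.ofReal_im,
        RCLike.star_def, Complex.conj_re, Complex.conj_im, Complex.I_re, Complex.I_im]
      ring

set_option maxHeartbeats 1000000 in
lemma Eobs_zero (v : E3) : Eobs 1 v 0 = 1 - Amat 1 v := by simp [Eobs]
lemma Eobs_one (v : E3) : Eobs 1 v 1 = Amat 1 v := by simp [Eobs]


def eps : Fin 2 → ℝ := fun i => if i = 1 then 1 else -1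
@[simp] lemma eps0 : eps 0 = -1 := rfl
@[simp] lemma eps1 : eps 1 = 1 := rfl

set_option maxHeartbeats 1000000 in
lemma pair_jm (a b : E3) (l : ℝ) (hab : (inner ℝ a b : ℝ) = 0)
    (hna : ‖a‖ = l) (hnb : ‖b‖ = l) (hl0 : 0 < l) (hl2 : l ≤ 1 / Real.sqrt 2) :
    JointlyMeasurable2 (Eobs 1 a) (Eobs 1 b) := by
  have hl2' : l^2 ≤ 1/2 := by
    have h2 : (0:ℝ) < Real.sqrt 2 := Real.sqrt_pos.mpr (by norm_num)
    have : l * Real.sqrt 2 ≤ 1 := by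
      rw [le_div_iff₀ h2] at hl2; exact hl2
    nlinarith [Real.sq_sqrt (show (0:ℝ) ≤ 2 by norm_num), hl0]
  refine ⟨fun i j => (((4:ℝ)⁻¹ : ℝ):ℂ) • (1:Mat2) +
      dotSigma ((4:ℝ)⁻¹ • (eps i • a + eps j • b)), ?_, ?_, ?_, ?_⟩
  · intro i j
    apply psd_aux _ _ (by norm_num)
    have heps : ∀ i : Fin 2, eps i = 1 ∨ eps i = -1 := by intro i; fin_cases i <;> simp
    have hn : ‖eps i • a + eps j • b‖^2 = 2 * l^2 := by
      rw [norm_add_sq_real]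
      rw [real_inner_smul_left, real_inner_smul_right, hab]
      rw [norm_smul, norm_smul, hna, hnb]
      rcases heps i with h | h <;> rcases heps j with h' | h' <;>
        simp [h, h'] <;> ring
    rw [norm_smul]
    have : ‖eps i • a + eps j • b‖ ≤ 1 := by
      nlinarith [norm_nonneg (eps i • a + eps j • b)]
    calc ‖(4:ℝ)⁻¹‖ * ‖eps i • a + eps j • b‖ ≤ ‖(4:ℝ)⁻¹‖ * 1 := by
          exact mul_le_mul_of_nonneg_left this (norm_nonneg _)
      _ ≤ (4:ℝ)⁻¹ := by simp [abs_of_nonneg]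
  · simp only [Fin.sum_univ_two]
    ext i j
    fin_cases i <;> fin_cases j <;>
      simp [dotSigma, sigma1, sigma2, sigma3, Matrix.one_apply,
        PiLp.add_apply, PiLp.smul_apply, smul_eq_mul] <;> push_cast <;> ring
  · intro i
    simp only [Fin.sum_univ_two]
    fin_cases i <;> (ext i j; fin_cases i <;> fin_cases j <;>
      simp [dotSigma, sigma1, sigma2, sigma3, Amat, Eobs_zero, Eobs_one, Matrix.one_apply,
        PiLp.add_apply, PiLp.smul_apply, smul_eq_mul] <;> push_cast <;> ring)
  · intro j
    simp only [Fin.sum_univ_two]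
    fin_cases j <;> (ext i j; fin_cases i <;> fin_cases j <;>
      simp [dotSigma, sigma1, sigma2, sigma3, Amat, Eobs_zero, Eobs_one, Matrix.one_apply,
        PiLp.add_apply, PiLp.smul_apply, smul_eq_mul] <;> push_cast <;> ring)

open scoped MatrixOrder in
lemma trace_mul_nonneg {P Q : Mat2} (hP : P.PosSemidef) (hQ' : Q.PosSemidef) :
    0 ≤ (P * Q).trace := by
  have hQ : (CFC.sqrt Q).PosSemidef ∧ CFC.sqrt Q * CFC.sqrt Q = Q :=
    ⟨(CFC.sqrt_nonneg Q).posSemidef, CFC.sqrt_mul_sqrt_self Q hQ'.nonneg⟩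
  have h2 : (CFC.sqrt Q * P * CFC.sqrt Q).PosSemidef := by
    have := hP.mul_mul_conjTranspose_same (CFC.sqrt Q)
    rwa [hQ.1.isHermitian.eq] at this
  have h3 : (P * Q).trace = (CFC.sqrt Q * P * CFC.sqrt Q).trace := by
    conv_lhs => rw [← hQ.2]
    rw [← Matrix.mul_assoc, Matrix.trace_mul_cycle]
  rw [h3, Matrix.trace_fin_two]
  have d0 : 0 ≤ (CFC.sqrt Q * P * CFC.sqrt Q) 0 0 := h2.diag_nonneg
  have d1 : 0 ≤ (CFC.sqrt Q * P * CFC.sqrt Q) 1 1 := h2.diag_nonneg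
  exact add_nonneg d0 d1

lemma dotSigma_comb (x y z : ℝ) (u v w : E3) :
    dotSigma (x • u + y • v + z • w)
      = (x:ℂ) • dotSigma u + (y:ℂ) • dotSigma v + (z:ℂ) • dotSigma w := by
  ext i j
  fin_cases i <;> fin_cases j <;>
    simp [dotSigma, sigma1, sigma2, sigma3, PiLp.add_apply, PiLp.smul_apply,
      smul_eq_mul] <;> push_cast <;> ring

lemma Eobs_diff (v : E3) : Eobs 1 v 1 - Eobs 1 v 0 = dotSigma v := by
  rw [Eobs_one, Eobs_zero, Amat]
  ext i j
  fin_cases i <;> fin_cases j <;>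
    simp [dotSigma, sigma1, sigma2, sigma3, Matrix.one_apply] <;> ring

lemma trace_DD (v : E3) : (dotSigma v * dotSigma v).trace
    = 2 * (((v 0)^2 + (v 1)^2 + (v 2)^2 : ℝ) : ℂ) := by
  simp [dotSigma, sigma1, sigma2, sigma3, Matrix.trace_fin_two, Matrix.mul_apply,
    Fin.sum_univ_two]
  push_cast
  linear_combination (-2*((v 1 : ℝ):ℂ)^2) * Complex.I_sq

lemma coords_sq (v : E3) : (v 0)^2 + (v 1)^2 + (v 2)^2 = ‖v‖^2 := by
  rw [EuclideanSpace.norm_eq, Real.sq_sqrt (by positivity)]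
  simp [Fin.sum_univ_three, sq_abs]

lemma not_triple (a b c : E3) (l : ℝ)
    (hab : (inner ℝ a b : ℝ) = 0) (hac : (inner ℝ a c : ℝ) = 0) (hbc : (inner ℝ b c : ℝ) = 0)
    (hna : ‖a‖ = l) (hnb : ‖b‖ = l) (hnc : ‖c‖ = l)
    (hl1 : 1 / Real.sqrt 3 < l) :
    ¬ JointlyMeasurable3 (Eobs 1 a) (Eobs 1 b) (Eobs 1 c) := by
  have hs0 : (0:ℝ) < Real.sqrt 3 := Real.sqrt_pos.mpr (by norm_num)
  have hl0 : (0:ℝ) < l := lt_trans (by positivity) hl1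
  rintro ⟨G, hpos, hsum, hEa, hEb, hEc⟩
  set s := Real.sqrt 3 with hs
  set r := l * s with hr
  have hr0 : (0:ℝ) ≤ r := by positivity
  -- norm of sign combinations
  have hnorm : ∀ x y z : ℝ, |x| = 1 → |y| = 1 → |z| = 1 →
      ‖x • a + y • b + z • c‖ ≤ r := by
    intro x y z hx hy hz
    have h1 : ‖x • a + y • b + z • c‖^2 = 3 * l^2 := by
      rw [norm_add_sq_real, norm_add_sq_real]
      simp only [inner_add_left, real_inner_smul_left, real_inner_smul_right]
      rw [hab, hac, hbc, norm_smul, norm_smul, norm_smul, hna, hnb, hnc]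
      simp [hx, hy, hz]
      ring
    have h2 : r^2 = 3 * l^2 := by
      rw [hr, mul_pow, hs, Real.sq_sqrt (by norm_num)]; ring
    have := norm_nonneg (x • a + y • b + z • c)
    nlinarith
  have hQ : ∀ i j k : Fin 2, ((r:ℂ) • (1:Mat2) +
      dotSigma ((-eps i) • a + (-eps j) • b + (-eps k) • c)).PosSemidef := by
    intro i j k
    apply psd_aux r _ hr0
    apply hnorm
    all_goals fin_cases i <;> fin_cases j <;> fin_cases k <;> simp
  have hT : (0:ℂ) ≤ ∑ i, ∑ j, ∑ k, (G i j k * ((r:ℂ) • (1:Mat2) +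
      dotSigma ((-eps i) • a + (-eps j) • b + (-eps k) • c))).trace := by
    refine Finset.sum_nonneg fun i _ => Finset.sum_nonneg fun j _ =>
      Finset.sum_nonneg fun k _ => trace_mul_nonneg (hpos i j k) (hQ i j k)
  -- expand the trace
  have expand : ∀ (X : Mat2) (x y z : ℝ),
      (X * ((r:ℂ) • (1:Mat2) + dotSigma (x • a + y • b + z • c))).trace
        = (r:ℂ) * X.trace + (x:ℂ) * (X * dotSigma a).trace
          + (y:ℂ) * (X * dotSigma b).trace + (z:ℂ) * (X * dotSigma c).trace := by
    intro X x y z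
    rw [dotSigma_comb]
    simp [Matrix.mul_add, Matrix.mul_smul, Matrix.trace_add, Matrix.trace_smul,
      smul_eq_mul, Matrix.mul_one]
    ring
  -- trace of full sum
  have hTsum := congrArg Matrix.trace hsum
  simp only [Fin.sum_univ_two, Matrix.trace_add] at hTsum
  rw [show (1:Mat2).trace = 2 from by simp [Matrix.trace_fin_two]] at hTsum
  have hDa := congrArg (fun X => (X * dotSigma a).trace) (congrArg₂ (· - ·) (hEa 1) (hEa 0))
  have hDb := congrArg (fun X => (X * dotSigma b).trace) (congrArg₂ (· - ·) (hEb 1) (hEb 0))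
  have hDc := congrArg (fun X => (X * dotSigma c).trace) (congrArg₂ (· - ·) (hEc 1) (hEc 0))
  beta_reduce at hDa hDb hDc
  rw [Eobs_diff] at hDa hDb hDc
  simp only [Fin.sum_univ_two, Matrix.sub_mul, Matrix.add_mul, Matrix.trace_sub,
    Matrix.trace_add] at hDa hDb hDc
  rw [trace_DD, coords_sq, hna] at hDa
  rw [trace_DD, coords_sq, hnb] at hDb
  rw [trace_DD, coords_sq, hnc] at hDc
  -- combine: hT says 0 ≤ 2r - 6 l^2
  have heq : (∑ i, ∑ j, ∑ k, (G i j k * ((r:ℂ) • (1:Mat2) +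
      dotSigma ((-eps i) • a + (-eps j) • b + (-eps k) • c))).trace)
        = ((2*r - 6*l^2 : ℝ) : ℂ) := by
    simp only [Fin.sum_univ_two, expand, eps0, eps1, neg_neg]
    push_cast at hTsum hDa hDb hDc ⊢
    linear_combination (r:ℂ) * hTsum - hDa - hDb - hDc
  rw [heq, Complex.zero_le_real] at hT
  have hls : 1 < l * s := by
    rw [div_lt_iff₀ hs0] at hl1; linarith
  have hs3 : s^2 = 3 := Real.sq_sqrt (by norm_num)
  have h3l : 3*l ≤ s := by nlinarith [hT, hl0]
  nlinarith [h3l, hls, hs3, hl0, hs0]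


/-- for mutually orthogonal `a`, `b`, `c` of common norm `l` with
`1/√3 < l ≤ 1/√2`, the observables `E^{1,a}`, `E^{1,b}`, `E^{1,c}` are pairwise jointly
measurable but not jointly measurable as a triple. -/
theorem pairwise_but_not_triple (a b c : E3) (l : ℝ)
    (hab : (inner ℝ a b : ℝ) = 0) (hac : (inner ℝ a c : ℝ) = 0) (hbc : (inner ℝ b c : ℝ) = 0)
    (hna : ‖a‖ = l) (hnb : ‖b‖ = l) (hnc : ‖c‖ = l)
    (hl1 : 1 / Real.sqrt 3 < l) (hl2 : l ≤ 1 / Real.sqrt 2) :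
    JointlyMeasurable2 (Eobs 1 a) (Eobs 1 b) ∧ JointlyMeasurable2 (Eobs 1 a) (Eobs 1 c) ∧
      JointlyMeasurable2 (Eobs 1 b) (Eobs 1 c) ∧
      ¬ JointlyMeasurable3 (Eobs 1 a) (Eobs 1 b) (Eobs 1 c) := by
  have hs3 : (0:ℝ) < Real.sqrt 3 := Real.sqrt_pos.mpr (by norm_num)
  have hl0 : (0:ℝ) < l := lt_trans (by positivity) hl1
  have hba : (inner ℝ b a : ℝ) = 0 := by rw [real_inner_comm]; exact hab
  refine ⟨pair_jm a b l hab hna hnb hl0 hl2, pair_jm a c l hac hna hnc hl0 hl2,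
    pair_jm b c l hbc hnb hnc hl0 hl2, not_triple a b c l hab hac hbc hna hnb hnc hl1⟩
end
end
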